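/- Let L be a locally compact Hausdorff topological group with left Haar measure μ, M a compact open subgroup with μ(M) = 1, V a finite-dimensional complex inner product space, and σ : M → B(V) a continuous homomorphism into the unitary operators on V. Let f, g : L → B(V) be compactly supported functions satisfying f(mxn) = σ(m) ∘ f(x) ∘ σ(n) and g(mxn) = σ(m) ∘ g(x) ∘ σ(n) for all m, n ∈ M, x ∈ L. Then for every x ∈ L and every set R ⊆ L containing exactly one element of each left coset yM of M in L, one has ∫_L f(y) ∘ g(y⁻¹x) dμ(y) = Σ_{r ∈ R} f(r) ∘ g(r⁻¹x), the sum having only finitely many nonzero terms, and this value is independent of the choice of R. -/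

import Mathlib

open MeasureTheory Pointwise

/-- Let `L` be a locally compact Hausdorff group with left Haar measure `μ`,
`M` a compact open subgroup with `μ M = 1`, `σ : M → B(V)` a continuous unitary
representation on a finite-dimensional complex inner product space `V`, and `f, g` compactly
supported bi-`(M,σ)`-equivariant functions `L → B(V)`.  Then for every `x ∈ L` and every set
`R` of representatives of the left cosets of `M` (exactly one element in each coset `y M`),
the convolution `∫ f(y) ∘ g(y⁻¹ x) dμ(y)` equals `Σ_{r ∈ R} f r ∘ g (r⁻¹ x)`, a sum with
finitely many nonzero terms. -/
theorem stmt_4 {L : Type*} [Group L] [TopologicalSpace L] [IsTopologicalGroup L]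
    [LocallyCompactSpace L] [T2Space L] [MeasurableSpace L] [BorelSpace L]
    {V : Type*} [NormedAddCommGroup V] [InnerProductSpace ℂ V] [FiniteDimensional ℂ V]
    (μ : Measure L) [μ.IsHaarMeasure]
    (M : Subgroup L) (hMc : IsCompact (M : Set L)) (hMo : IsOpen (M : Set L))
    (hμM : μ (M : Set L) = 1)
    (σ : M →* (V →L[ℂ] V)) (hσc : Continuous σ) (hσu : ∀ m : M, σ m ∈ unitary (V →L[ℂ] V))
    (f g : L → (V →L[ℂ] V)) (hfc : HasCompactSupport f) (hgc : HasCompactSupport g)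
    (hf : ∀ (m n : M) (x : L), f ((m : L) * x * (n : L)) = σ m * f x * σ n)
    (hg : ∀ (m n : M) (x : L), g ((m : L) * x * (n : L)) = σ m * g x * σ n)
    (x : L) (R : Set L) (hR : ∀ y : L, ∃! r : L, r ∈ R ∧ r⁻¹ * y ∈ M) :
    {r ∈ R | f r * g (r⁻¹ * x) ≠ 0}.Finite ∧
    ∫ y, f y * g (y⁻¹ * x) ∂μ = ∑ᶠ r ∈ R, f r * g (r⁻¹ * x) := by
  classical
  set h : L → (V →L[ℂ] V) := fun y => f y * g (y⁻¹ * x) with hh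
  -- `h` is constant on left cosets of `M`
  have hconst : ∀ (y : L) (m : M), h (y * (m : L)) = h y := by
    intro y m
    have h1 : f (y * (m : L)) = f y * σ m := by
      have := hf 1 m y
      simpa using this
    have h2 : g ((y * (m : L))⁻¹ * x) = σ m⁻¹ * g (y⁻¹ * x) := by
      have := hg m⁻¹ 1 (y⁻¹ * x)
      simpa [mul_assoc] using this
    simp only [hh, h1, h2]
    rw [mul_assoc, ← mul_assoc (σ m), ← map_mul, mul_inv_cancel, map_one, one_mul]
  -- representatives: if r⁻¹ * y ∈ M then h y = h r
  have hrep : ∀ (y r : L), r⁻¹ * y ∈ M → h y = h r := by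
    intro y r hm
    have : y = r * ((⟨r⁻¹ * y, hm⟩ : M) : L) := by
      simp [mul_inv_cancel_left]
    rw [this, hconst]
  -- membership in cosets
  have hmem : ∀ (r y : L), y ∈ r • (M : Set L) ↔ r⁻¹ * y ∈ M := by
    intro r y
    rw [Set.mem_smul_set_iff_inv_smul_mem]
    rfl
  -- uniqueness of representatives
  have huniq : ∀ r ∈ R, ∀ r' ∈ R, r'⁻¹ * r ∈ M → r' = r := by
    intro r hr r' hr' hm
    exact (hR r).unique ⟨hr', hm⟩ ⟨hr, by simpa using M.one_mem⟩
  -- `h` is continuous (locally constant on open cosets)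
  have hcont : Continuous h := by
    rw [continuous_def]
    intro A _
    rw [isOpen_iff_forall_mem_open]
    intro y hy
    refine ⟨y • (M : Set L), ?_, hMo.smul y, ?_⟩
    · intro z hz
      have hz' : y⁻¹ * z ∈ M := (hmem y z).1 hz
      have := hrep z y hz'
      simpa [Set.mem_preimage, this] using hy
    · exact ⟨1, M.one_mem, mul_one y⟩
  -- support of `h` is inside support of `f`
  have hsupp : Function.support h ⊆ Function.support f := by
    intro y hy
    simp only [Function.mem_support, hh] at hy ⊢
    intro h0
    exact hy (by rw [h0, zero_mul])
  have hhc : HasCompactSupport h := by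
    rw [hasCompactSupport_def]
    exact hfc.of_isClosed_subset isClosed_closure (closure_mono hsupp)
  have hint : Integrable h μ := hcont.integrable_of_hasCompactSupport hhc
  -- finiteness of the set of nonzero representatives
  have hcover : (tsupport f) ⊆ ⋃ r : R, (r : L) • (M : Set L) := by
    intro y _
    obtain ⟨r, ⟨hrR, hrm⟩, _⟩ := hR y
    exact Set.mem_iUnion.2 ⟨⟨r, hrR⟩, (hmem r y).2 hrm⟩
  obtain ⟨t, ht⟩ := hfc.elim_finite_subcover (fun r : R => (r : L) • (M : Set L))
    (fun r => hMo.smul (r : L)) hcover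
  have hFin : ({r ∈ R | h r ≠ 0}).Finite := by
    refine Set.Finite.subset (t.image (Subtype.val)).finite_toSet ?_
    rintro r ⟨hrR, hr0⟩
    have hrfs : r ∈ Function.support h := hr0
    have hrK : r ∈ tsupport f := subset_closure (hsupp hrfs)
    obtain ⟨i, hit, hri⟩ := Set.mem_iUnion₂.1 (ht hrK)
    have : (i : L) = r := huniq r hrR (i : L) i.2 ((hmem (i : L) r).1 hri)
    simpa [← this] using Finset.mem_image_of_mem Subtype.val hit
  have hFin' : (R ∩ Function.support (fun r => h r)).Finite := by
    refine hFin.subset ?_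
    rintro r ⟨hrR, hr0⟩
    exact ⟨hrR, hr0⟩
  refine ⟨hFin, ?_⟩
  set S : Finset L := hFin'.toFinset with hS
  have hSmem : ∀ r : L, r ∈ S ↔ r ∈ R ∧ h r ≠ 0 := by
    intro r
    simp only [hS, Set.Finite.mem_toFinset, Set.mem_inter_iff, Function.mem_support]
  -- the function vanishes outside the union of cosets of S
  have hU : ∀ y : L, y ∉ ⋃ r ∈ S, r • (M : Set L) → h y = 0 := by
    intro y hy
    by_contra h0
    obtain ⟨r, ⟨hrR, hrm⟩, _⟩ := hR y
    have heq : h y = h r := hrep y r hrm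
    have : r ∈ S := (hSmem r).2 ⟨hrR, fun hz => h0 (heq.trans hz)⟩
    exact hy (Set.mem_biUnion this ((hmem r y).2 hrm))
  have hmeas : ∀ r ∈ S, MeasurableSet (r • (M : Set L)) :=
    fun r _ => (hMo.smul r).measurableSet
  have hdisj : Set.Pairwise (↑S : Set L) (Function.onFun Disjoint fun r => r • (M : Set L)) := by
    intro r hr r' hr' hne
    rw [Function.onFun, Set.disjoint_left]
    intro y hy hy'
    have h1 := (hmem r y).1 hy
    have h2 := (hmem r' y).1 hy'
    exact hne ((hR y).unique ⟨((hSmem r).1 hr).1, h1⟩ ⟨((hSmem r').1 hr').1, h2⟩)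
  calc ∫ y, h y ∂μ = ∫ y in ⋃ r ∈ S, r • (M : Set L), h y ∂μ :=
        (setIntegral_eq_integral_of_forall_compl_eq_zero hU).symm
    _ = ∑ r ∈ S, ∫ y in r • (M : Set L), h y ∂μ :=
        integral_biUnion_finset S hmeas hdisj (fun r _ => hint.integrableOn)
    _ = ∑ r ∈ S, h r := by
        refine Finset.sum_congr rfl fun r hr => ?_
        have hEq : Set.EqOn h (fun _ => h r) (r • (M : Set L)) := by
          intro y hy
          exact hrep y r ((hmem r y).1 hy)
        rw [setIntegral_congr_fun ((hMo.smul r).measurableSet) hEq, setIntegral_const,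
          measureReal_def, measure_smul, hμM, ENNReal.toReal_one, one_smul]
    _ = ∑ᶠ r ∈ R, h r := by
        rw [finsum_mem_eq_sum _ hFin']
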